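/- Appendix claim (key computation for Theorem 3.2(1)): Let p be an odd prime, let k₁, k₂, k₃, m₁, m₂ be natural numbers, n = k₁ + k₂ + k₃ + m₁ + m₂ and k = k₁ + k₂ + k₃. Let A₁ (k₁×k₃), B₁ (k₁×k₂), A₂, B₂ (k₁×m₁), A₃, B₃ (k₁×m₂), A₄ (k₂×m₁), B₄ (k₃×m₂) be matrices over F_p, regarded as matrices over R via c ↦ (c,c). Define the k×n block matrix G = [ I_{k₁} | (1-v)B₁ | vA₁ | vA₂+(1-v)B₂ | vA₃+(1-v)B₃ ; 0 | vI_{k₂} | 0 | vA₄ | 0 ; 0 | 0 | (1-v)I_{k₃} | 0 | (1-v)B₄ ] (column blocks k₁, k₂, k₃, m₁, m₂), and with E₁ = (−A₂ | A₁B₄ − A₃)ᵀ, E₂ = (B₁A₄ − B₂ | −B₃)ᵀ, P = (−A₄ | 0)ᵀ, Q = (0 | −B₄)ᵀ define the (n−k+k₃+k₂)×n block matrix H = [ vE₁+(1-v)E₂ | P | Q | I_{n−k} ; v(−A₁ᵀ) | 0 | vI_{k₃} | 0 ; (1-v)(−B₁ᵀ) | (1-v)I_{k₂} | 0 | 0 ]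 (column blocks k₁, k₂, k₃, n−k). Then H · Gᵀ = 0. -/

import Mathlib

open Matrix

/-- The Euclidean dual of a linear code. -/
def dualCode {S : Type*} [CommRing S] {ι : Type*} [Fintype ι]
    (C : Submodule S (ι → S)) : Submodule S (ι → S) where
  carrier := {u | ∀ w ∈ C, ∑ i, u i * w i = 0}
  zero_mem' := by intro w hw; simp
  add_mem' := by
    intro a b ha hb w hw
    simp only [Set.mem_setOf_eq] at ha hb ⊢
    simp only [Pi.add_apply, add_mul, Finset.sum_add_distrib, ha w hw, hb w hw, add_zero]
  smul_mem' := by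
    intro c a ha w hw
    simp only [Set.mem_setOf_eq] at ha ⊢
    simp only [Pi.smul_apply, smul_eq_mul, mul_assoc, ← Finset.mul_sum, ha w hw, mul_zero]

variable (p : ℕ)

/-- `F_p → R = F_p × F_p`, `c ↦ (c, c)`. -/
def eR : ZMod p → ZMod p × ZMod p := fun c => (c, c)

/-- `v = (0, 1)`. -/
def vR : ZMod p × ZMod p := (0, 1)

/-- `1 - v = (1, 0)`. -/
def uR : ZMod p × ZMod p := (1, 0)

variable {k₁ k₂ k₃ m₁ m₂ : ℕ}
  (A₁ : Matrix (Fin k₁) (Fin k₃) (ZMod p)) (B₁ : Matrix (Fin k₁) (Fin k₂) (ZMod p))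
  (A₂ B₂ : Matrix (Fin k₁) (Fin m₁) (ZMod p)) (A₃ B₃ : Matrix (Fin k₁) (Fin m₂) (ZMod p))
  (A₄ : Matrix (Fin k₂) (Fin m₁) (ZMod p)) (B₄ : Matrix (Fin k₃) (Fin m₂) (ZMod p))

/-- The generator matrix
`G = [ I | (1-v)B₁ | vA₁ | vA₂+(1-v)B₂ | vA₃+(1-v)B₃ ; 0 | vI | 0 | vA₄ | 0 ;
  0 | 0 | (1-v)I | 0 | (1-v)B₄ ]`, with column blocks of sizes `k₁, k₂, k₃, m₁, m₂` and row
blocks of sizes `k₁, k₂, k₃`. -/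
def Gmat : Matrix (Fin k₁ ⊕ Fin k₂ ⊕ Fin k₃)
    (Fin k₁ ⊕ Fin k₂ ⊕ Fin k₃ ⊕ Fin m₁ ⊕ Fin m₂) (ZMod p × ZMod p) :=
  Matrix.of fun r c =>
    match r, c with
    | .inl i, .inl j => if i = j then 1 else 0
    | .inl i, .inr (.inl j) => uR p * eR p (B₁ i j)
    | .inl i, .inr (.inr (.inl j)) => vR p * eR p (A₁ i j)
    | .inl i, .inr (.inr (.inr (.inl j))) => vR p * eR p (A₂ i j) + uR p * eR p (B₂ i j)
    | .inl i, .inr (.inr (.inr (.inr j))) => vR p * eR p (A₃ i j) + uR p * eR p (B₃ i j)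
    | .inr (.inl _), .inl _ => 0
    | .inr (.inl i), .inr (.inl j) => if i = j then vR p else 0
    | .inr (.inl _), .inr (.inr (.inl _)) => 0
    | .inr (.inl i), .inr (.inr (.inr (.inl j))) => vR p * eR p (A₄ i j)
    | .inr (.inl _), .inr (.inr (.inr (.inr _))) => 0
    | .inr (.inr _), .inl _ => 0
    | .inr (.inr _), .inr (.inl _) => 0
    | .inr (.inr i), .inr (.inr (.inl j)) => if i = j then uR p else 0
    | .inr (.inr _), .inr (.inr (.inr (.inl _))) => 0
    | .inr (.inr i), .inr (.inr (.inr (.inr j))) => uR p * eR p (B₄ i j)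

/-- `E₁ = (−A₂ | A₁B₄ − A₃)ᵀ`. -/
def E₁mat : Matrix (Fin m₁ ⊕ Fin m₂) (Fin k₁) (ZMod p) :=
  (Matrix.fromCols (-A₂) (A₁ * B₄ - A₃))ᵀ

/-- `E₂ = (B₁A₄ − B₂ | −B₃)ᵀ`. -/
def E₂mat : Matrix (Fin m₁ ⊕ Fin m₂) (Fin k₁) (ZMod p) :=
  (Matrix.fromCols (B₁ * A₄ - B₂) (-B₃))ᵀ

/-- `P = (−A₄ | 0)ᵀ`. -/
def Pmat : Matrix (Fin m₁ ⊕ Fin m₂) (Fin k₂) (ZMod p) :=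
  (Matrix.fromCols (-A₄) (0 : Matrix (Fin k₂) (Fin m₂) (ZMod p)))ᵀ

/-- `Q = (0 | −B₄)ᵀ`. -/
def Qmat : Matrix (Fin m₁ ⊕ Fin m₂) (Fin k₃) (ZMod p) :=
  (Matrix.fromCols (0 : Matrix (Fin k₃) (Fin m₁) (ZMod p)) (-B₄))ᵀ

/-- The parity check matrix
`H = [ vE₁+(1-v)E₂ | P | Q | I ; v(−A₁ᵀ) | 0 | vI | 0 ; (1-v)(−B₁ᵀ) | (1-v)I | 0 | 0 ]`,
with column blocks of sizes `k₁, k₂, k₃, n−k = m₁+m₂` and row blocks of sizes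
`n−k = m₁+m₂, k₃, k₂`. -/
def Hmat : Matrix ((Fin m₁ ⊕ Fin m₂) ⊕ Fin k₃ ⊕ Fin k₂)
    (Fin k₁ ⊕ Fin k₂ ⊕ Fin k₃ ⊕ Fin m₁ ⊕ Fin m₂) (ZMod p × ZMod p) :=
  Matrix.of fun r c =>
    match r, c with
    | .inl s, .inl j =>
        vR p * eR p (E₁mat p A₁ A₂ A₃ B₄ s j) + uR p * eR p (E₂mat p B₁ B₂ B₃ A₄ s j)
    | .inl s, .inr (.inl j) => eR p (Pmat p A₄ s j)
    | .inl s, .inr (.inr (.inl j)) => eR p (Qmat p B₄ s j)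
    | .inl s, .inr (.inr (.inr (.inl t))) => if s = Sum.inl t then 1 else 0
    | .inl s, .inr (.inr (.inr (.inr t))) => if s = Sum.inr t then 1 else 0
    | .inr (.inl i), .inl j => vR p * eR p ((-A₁ᵀ) i j)
    | .inr (.inl _), .inr (.inl _) => 0
    | .inr (.inl i), .inr (.inr (.inl j)) => if i = j then vR p else 0
    | .inr (.inl _), .inr (.inr (.inr _)) => 0
    | .inr (.inr i), .inl j => uR p * eR p ((-B₁ᵀ) i j)
    | .inr (.inr i), .inr (.inl j) => if i = j then uR p else 0
    | .inr (.inr _), .inr (.inr _) => 0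

set_option maxHeartbeats 1000000 in
/-- Appendix claim (key computation for Theorem 3.2(1)): for odd `p`, `H · Gᵀ = 0`. -/
theorem H_mul_G_transpose_eq_zero (hp : p.Prime) (hodd : Odd p) :
    Hmat p A₁ B₁ A₂ B₂ A₃ B₃ A₄ B₄ * (Gmat p A₁ B₁ A₂ B₂ A₃ B₃ A₄ B₄)ᵀ = 0 := by
  ext r c
  all_goals rcases r with ((s|s)|i|i) <;> rcases c with (j|j|j) <;>
  simp only [Hmat, Gmat, E₁mat, E₂mat, Pmat, Qmat, vR, uR, eR,
      Matrix.mul_apply, Fintype.sum_sum_type, Matrix.of_apply, Matrix.transpose_apply,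
      Matrix.fromCols, Matrix.neg_apply, Matrix.sub_apply, Matrix.zero_apply,
      Prod.mk_mul_mk, Prod.mk_add_mk, Prod.fst_sum, Prod.snd_sum, Prod.ext_iff,
      Prod.fst_zero, Prod.snd_zero, Prod.fst_one, Prod.snd_one,
      mul_zero, zero_mul, mul_one, one_mul, add_zero, zero_add,
      Finset.sum_const_zero, mul_ite, ite_mul,
      Finset.sum_ite_eq, Finset.sum_ite_eq', Finset.mem_univ, if_true,
      Sum.elim_inl, Sum.elim_inr, Sum.inl.injEq, Sum.inr.injEq, reduceCtorEq,
      Prod.mk_zero_zero, Finset.sum_sub_distrib, neg_mul, mul_neg, sub_eq_add_neg,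
      Finset.sum_add_distrib, if_false, ite_self, Matrix.add_apply]
  all_goals try simp only [Prod.fst_add, Prod.snd_add, Prod.fst_sum, Prod.snd_sum,
      Prod.fst_zero, Prod.snd_zero, Finset.sum_const_zero, Finset.sum_add_distrib,
      Finset.sum_neg_distrib, Finset.sum_sub_distrib, add_zero, zero_add]
  all_goals first
    | ring1
    | (simp only [mul_comm]; ring1)
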